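/- Monotonicity of expectiles under convex order for levels at least 1/2: if X ≤_cx Y (i.e. E[u(X)] ≤ E[u(Y)] for every convex u for which both expectations exist), then e_γ(X) ≤ e_γ(Y) for every γ ∈ [1/2, 1). -/

import Mathlib

open MeasureTheory ProbabilityTheory Real Set

/-- Asymmetric squared-loss objective whose minimizer is the `γ`-expectile. -/
noncomputable def phi {Ω : Type*} [MeasurableSpace Ω] (μ : Measure Ω) (γ : ℝ)
    (X : Ω → ℝ) (y : ℝ) : ℝ :=
  γ * ∫ ω, (max (X ω - y) 0) ^ 2 ∂μ + (1 - γ) * ∫ ω, (max (y - X ω) 0) ^ 2 ∂μ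

/-- `e` is the γ-expectile of `X` under `μ`: the unique minimizer of `phi`. -/
def IsExpectile {Ω : Type*} [MeasurableSpace Ω] (μ : Measure Ω) (γ : ℝ)
    (X : Ω → ℝ) (e : ℝ) : Prop :=
  (∀ y, phi μ γ X e ≤ phi μ γ X y) ∧ ∀ y, (∀ z, phi μ γ X y ≤ phi μ γ X z) → y = e

-- pointwise derivative of squared positive part
lemma hasDerivAt_maxsq (t : ℝ) : HasDerivAt (fun s : ℝ => (max s 0) ^ 2) (2 * max t 0) t := by
  rcases lt_trichotomy t 0 with ht | ht | ht
  · have h : (fun s : ℝ => (max s 0) ^ 2) =ᶠ[nhds t] fun _ => (0:ℝ) := by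
      filter_upwards [eventually_lt_nhds ht] with s hs
      simp [max_eq_right hs.le]
    have : HasDerivAt (fun _ : ℝ => (0:ℝ)) 0 t := hasDerivAt_const t 0
    have := this.congr_of_eventuallyEq h
    simpa [max_eq_right ht.le] using this
  · subst ht
    rw [hasDerivAt_iff_isLittleO]
    simp only [max_self, mul_zero, smul_zero, sub_zero]
    rw [Asymptotics.isLittleO_iff]
    intro c hc
    have : ∀ᶠ x : ℝ in nhds 0, |x| < c := by
      have := Metric.ball_mem_nhds (0:ℝ) hc
      filter_upwards [this] with x hx
      simpa [Real.dist_eq] using hx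
    filter_upwards [this] with x hx
    have h1 : (max x 0)^2 ≤ |x| * |x| := by
      have hm : max x 0 ≤ |x| := max_le (le_abs_self x) (abs_nonneg x)
      nlinarith [le_max_right x 0]
    have : ‖(max x 0)^2‖ ≤ c * ‖x‖ := by
      rw [Real.norm_eq_abs, Real.norm_eq_abs, abs_of_nonneg (by positivity : (0:ℝ) ≤ (max x 0)^2)]
      calc (max x 0)^2 ≤ |x| * |x| := h1
        _ ≤ c * |x| := by nlinarith [abs_nonneg x]
    simpa using this
  · have h : (fun s : ℝ => (max s 0) ^ 2) =ᶠ[nhds t] fun s => s ^ 2 := by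
      filter_upwards [eventually_gt_nhds ht] with s hs
      simp [max_eq_left hs.le]
    have : HasDerivAt (fun s : ℝ => s ^ 2) (2 * t) t := by
      simpa using (hasDerivAt_pow 2 t)
    have := this.congr_of_eventuallyEq h
    simpa [max_eq_left ht.le] using this

section Expectile

variable {Ω : Type*} [MeasurableSpace Ω] {μ : Measure Ω} [IsProbabilityMeasure μ]

lemma int_pos_part {Z : Ω → ℝ} (hZ : MemLp Z 2 μ) (e : ℝ) :
    Integrable (fun ω => max (Z ω - e) 0) μ :=
  ((hZ.integrable one_le_two).sub (integrable_const e)).pos_part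

lemma int_neg_part {Z : Ω → ℝ} (hZ : MemLp Z 2 μ) (e : ℝ) :
    Integrable (fun ω => max (e - Z ω) 0) μ :=
  ((integrable_const e).sub (hZ.integrable one_le_two)).pos_part

lemma int_pos_sq {Z : Ω → ℝ} (hZ : MemLp Z 2 μ) (e : ℝ) :
    Integrable (fun ω => (max (Z ω - e) 0) ^ 2) μ := by
  have h : Integrable (fun ω => (Z ω - e) ^ 2) μ := (hZ.sub (memLp_const e)).integrable_sq
  refine h.mono' ?_ ?_
  · have m : AEStronglyMeasurable (fun ω => max (Z ω - e) 0) μ := (int_pos_part hZ e).1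
    exact m.pow 2
  · filter_upwards with ω
    rw [Real.norm_eq_abs, abs_of_nonneg (by positivity)]
    rcases le_total (Z ω - e) 0 with h' | h'
    · simp [max_eq_right h']; positivity
    · rw [max_eq_left h']

lemma int_neg_sq {Z : Ω → ℝ} (hZ : MemLp Z 2 μ) (e : ℝ) :
    Integrable (fun ω => (max (e - Z ω) 0) ^ 2) μ := by
  have h : Integrable (fun ω => (e - Z ω) ^ 2) μ := ((memLp_const e).sub hZ).integrable_sq
  refine h.mono' ?_ ?_
  · have m : AEStronglyMeasurable (fun ω => max (e - Z ω) 0) μ := (int_neg_part hZ e).1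
    exact m.pow 2
  · filter_upwards with ω
    rw [Real.norm_eq_abs, abs_of_nonneg (by positivity)]
    rcases le_total (e - Z ω) 0 with h' | h'
    · simp [max_eq_right h']; positivity
    · rw [max_eq_left h']

-- a single Lipschitz estimate
lemma maxsq_lip {a b M : ℝ} (ha : |a| ≤ M) (hb : |b| ≤ M) :
    |(max a 0)^2 - (max b 0)^2| ≤ 2 * M * |a - b| := by
  have h1 : |max a 0 - max b 0| ≤ |a - b| := abs_max_sub_max_le_abs a b 0
  have h2 : max a 0 ≤ M := max_le (le_of_abs_le ha) (by linarith [abs_nonneg a])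
  have h3 : max b 0 ≤ M := max_le (le_of_abs_le hb) (by linarith [abs_nonneg b])
  have h4 : (0:ℝ) ≤ max a 0 := le_max_right _ _
  have h5 : (0:ℝ) ≤ max b 0 := le_max_right _ _
  have key : (max a 0)^2 - (max b 0)^2 = (max a 0 - max b 0) * (max a 0 + max b 0) := by ring
  rw [key, abs_mul, abs_of_nonneg (show (0:ℝ) ≤ max a 0 + max b 0 by linarith)]
  calc |max a 0 - max b 0| * (max a 0 + max b 0) ≤ |a - b| * (2 * M) := by
        apply mul_le_mul h1 (by linarith) (by linarith) (abs_nonneg _)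
    _ = 2 * M * |a - b| := by ring

-- derivative of first integral
lemma hasDerivAt_int_pos {Z : Ω → ℝ} (hZ : MemLp Z 2 μ) (e : ℝ) :
    HasDerivAt (fun y => ∫ ω, (max (Z ω - y) 0) ^ 2 ∂μ)
      (∫ ω, -(2 * max (Z ω - e) 0) ∂μ) e := by
  have hmZ := hZ.aestronglyMeasurable
  refine (hasDerivAt_integral_of_dominated_loc_of_lip (F := fun y ω => (max (Z ω - y) 0) ^ 2)
    (F' := fun ω => -(2 * max (Z ω - e) 0)) (bound := fun ω => 2 * (|Z ω| + |e| + 1))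
    (Metric.ball_mem_nhds e one_pos) ?_ ?_ ?_ ?_ ?_ ?_).2
  · filter_upwards with y
    exact (int_pos_part hZ y).1.pow 2
  · exact int_pos_sq hZ e
  · exact ((int_pos_part hZ e).1.const_mul 2).neg
  · filter_upwards with ω
    rw [lipschitzOnWith_iff_dist_le_mul]
    intro y hy y' hy'
    simp only [Metric.mem_ball, Real.dist_eq] at hy hy'
    rw [Real.dist_eq, Real.dist_eq, Real.coe_nnabs,
      abs_of_nonneg (show (0:ℝ) ≤ 2 * (|Z ω| + |e| + 1) by positivity)]
    have ha : |Z ω - y| ≤ |Z ω| + |e| + 1 := by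
      have := abs_sub_abs_le_abs_sub y e
      calc |Z ω - y| ≤ |Z ω| + |y| := abs_sub _ _
        _ ≤ |Z ω| + |e| + 1 := by
            have : |y| - |e| ≤ |y - e| := abs_sub_abs_le_abs_sub y e
            linarith
    have hb : |Z ω - y'| ≤ |Z ω| + |e| + 1 := by
      calc |Z ω - y'| ≤ |Z ω| + |y'| := abs_sub _ _
        _ ≤ |Z ω| + |e| + 1 := by
            have : |y'| - |e| ≤ |y' - e| := abs_sub_abs_le_abs_sub y' e
            linarith
    have := maxsq_lip ha hb
    have heq : (Z ω - y) - (Z ω - y') = -(y - y') := by ring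
    rw [heq, abs_neg] at this
    exact this
  · exact (((hZ.integrable one_le_two).abs.add (integrable_const (|e| + 1))).const_mul 2).congr
      (by filter_upwards with ω
          show 2 * (((fun a => |Z a|) + fun _ => |e| + 1 : Ω → ℝ) ω) = 2 * (|Z ω| + |e| + 1)
          simp only [Pi.add_apply]; ring)
  · filter_upwards with ω
    have inner : HasDerivAt (fun y => Z ω - y) (-1) e := (hasDerivAt_id e).const_sub (Z ω)
    have outer := hasDerivAt_maxsq (Z ω - e)
    have := outer.comp e inner
    simpa [Function.comp_def] using this

lemma hasDerivAt_int_neg {Z : Ω → ℝ} (hZ : MemLp Z 2 μ) (e : ℝ) :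
    HasDerivAt (fun y => ∫ ω, (max (y - Z ω) 0) ^ 2 ∂μ)
      (∫ ω, 2 * max (e - Z ω) 0 ∂μ) e := by
  have hmZ := hZ.aestronglyMeasurable
  refine (hasDerivAt_integral_of_dominated_loc_of_lip (F := fun y ω => (max (y - Z ω) 0) ^ 2)
    (F' := fun ω => 2 * max (e - Z ω) 0) (bound := fun ω => 2 * (|Z ω| + |e| + 1))
    (Metric.ball_mem_nhds e one_pos) ?_ ?_ ?_ ?_ ?_ ?_).2
  · filter_upwards with y
    exact (int_neg_part hZ y).1.pow 2
  · exact int_neg_sq hZ e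
  · exact (int_neg_part hZ e).1.const_mul 2
  · filter_upwards with ω
    rw [lipschitzOnWith_iff_dist_le_mul]
    intro y hy y' hy'
    simp only [Metric.mem_ball, Real.dist_eq] at hy hy'
    rw [Real.dist_eq, Real.dist_eq, Real.coe_nnabs,
      abs_of_nonneg (show (0:ℝ) ≤ 2 * (|Z ω| + |e| + 1) by positivity)]
    have ha : |y - Z ω| ≤ |Z ω| + |e| + 1 := by
      calc |y - Z ω| ≤ |y| + |Z ω| := abs_sub _ _
        _ ≤ |Z ω| + |e| + 1 := by
            have : |y| - |e| ≤ |y - e| := abs_sub_abs_le_abs_sub y e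
            linarith
    have hb : |y' - Z ω| ≤ |Z ω| + |e| + 1 := by
      calc |y' - Z ω| ≤ |y'| + |Z ω| := abs_sub _ _
        _ ≤ |Z ω| + |e| + 1 := by
            have : |y'| - |e| ≤ |y' - e| := abs_sub_abs_le_abs_sub y' e
            linarith
    have := maxsq_lip ha hb
    have heq : (y - Z ω) - (y' - Z ω) = y - y' := by ring
    rw [heq] at this
    exact this
  · exact (((hZ.integrable one_le_two).abs.add (integrable_const (|e| + 1))).const_mul 2).congr
      (by filter_upwards with ω
          show 2 * (((fun a => |Z a|) + fun _ => |e| + 1 : Ω → ℝ) ω) = 2 * (|Z ω| + |e| + 1)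
          simp only [Pi.add_apply]; ring)
  · filter_upwards with ω
    have inner : HasDerivAt (fun y => y - Z ω) 1 e := (hasDerivAt_id e).sub_const (Z ω)
    have outer := hasDerivAt_maxsq (e - Z ω)
    have := outer.comp e inner
    simpa [Function.comp_def] using this

-- first-order condition
lemma foc {Z : Ω → ℝ} (hZ : MemLp Z 2 μ) {γ e : ℝ}
    (hmin : ∀ y, phi μ γ Z e ≤ phi μ γ Z y) :
    γ * ∫ ω, max (Z ω - e) 0 ∂μ = (1 - γ) * ∫ ω, max (e - Z ω) 0 ∂μ := by
  have d1 := hasDerivAt_int_pos hZ e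
  have d2 := hasDerivAt_int_neg hZ e
  have dphi : HasDerivAt (phi μ γ Z)
      (γ * ∫ ω, -(2 * max (Z ω - e) 0) ∂μ + (1 - γ) * ∫ ω, 2 * max (e - Z ω) 0 ∂μ) e := by
    exact (d1.const_mul γ).add (d2.const_mul (1 - γ))
  have hloc : IsLocalMin (phi μ γ Z) e := Filter.Eventually.of_forall hmin
  have h0 := hloc.hasDerivAt_eq_zero dphi
  rw [integral_neg, integral_const_mul, integral_const_mul] at h0
  linarith

end Expectile

theorem expectile_monotone_of_convex_order
    {Ω : Type*} [MeasurableSpace Ω] (μ : Measure Ω) [IsProbabilityMeasure μ]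
    (X Y : Ω → ℝ) (hX : MemLp X 2 μ) (hY : MemLp Y 2 μ)
    (hcx : ∀ u : ℝ → ℝ, ConvexOn ℝ Set.univ u →
      Integrable (fun ω => u (X ω)) μ → Integrable (fun ω => u (Y ω)) μ →
      ∫ ω, u (X ω) ∂μ ≤ ∫ ω, u (Y ω) ∂μ)
    (γ : ℝ) (hγ : γ ∈ Set.Ico (1/2 : ℝ) 1)
    (eX eY : ℝ) (heX : IsExpectile μ γ X eX) (heY : IsExpectile μ γ Y eY) :
    eX ≤ eY := by
  obtain ⟨hγ1, hγ2⟩ := hγ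
  have focX := foc hX heX.1
  have focY := foc hY heY.1
  by_contra hcon
  push_neg at hcon
  -- the convex test function
  set u : ℝ → ℝ := fun x => max (γ * (x - eY)) ((1 - γ) * (x - eY)) with hu_def
  have hu_eq : ∀ x, u x = γ * max (x - eY) 0 - (1 - γ) * max (eY - x) 0 := by
    intro x
    rcases le_total x eY with h' | h'
    · simp only [hu_def]
      rw [max_eq_right (show γ * (x - eY) ≤ (1 - γ) * (x - eY) by nlinarith),
        max_eq_right (show x - eY ≤ 0 by linarith),
        max_eq_left (show (0:ℝ) ≤ eY - x by linarith)]
      ring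
    · simp only [hu_def]
      rw [max_eq_left (show (1 - γ) * (x - eY) ≤ γ * (x - eY) by nlinarith),
        max_eq_left (show (0:ℝ) ≤ x - eY by linarith),
        max_eq_right (show eY - x ≤ 0 by linarith)]
      ring
  have huconv : ConvexOn ℝ Set.univ u := by
    have base : ConvexOn ℝ (Set.univ : Set ℝ) (fun x : ℝ => x - eY) :=
      (convexOn_id convex_univ).sub (concaveOn_const eY convex_univ)
    have c1 : ConvexOn ℝ (Set.univ : Set ℝ) (fun x : ℝ => γ * (x - eY)) := by
      have := base.smul (show (0:ℝ) ≤ γ by linarith)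
      simpa [smul_eq_mul] using this
    have c2 : ConvexOn ℝ (Set.univ : Set ℝ) (fun x : ℝ => (1 - γ) * (x - eY)) := by
      have := base.smul (show (0:ℝ) ≤ 1 - γ by linarith)
      simpa [smul_eq_mul] using this
    exact c1.sup c2
  have intuX : Integrable (fun ω => u (X ω)) μ := by
    simp only [hu_eq]
    exact ((int_pos_part hX eY).const_mul γ).sub ((int_neg_part hX eY).const_mul (1 - γ))
  have intuY : Integrable (fun ω => u (Y ω)) μ := by
    simp only [hu_eq]
    exact ((int_pos_part hY eY).const_mul γ).sub ((int_neg_part hY eY).const_mul (1 - γ))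
  have key := hcx u huconv intuX intuY
  simp only [hu_eq] at key
  rw [integral_sub ((int_pos_part hX eY).const_mul γ) ((int_neg_part hX eY).const_mul (1 - γ)),
    integral_sub ((int_pos_part hY eY).const_mul γ) ((int_neg_part hY eY).const_mul (1 - γ)),
    integral_const_mul, integral_const_mul, integral_const_mul, integral_const_mul] at key
  -- key : γ * ∫ (X-eY)⁺ - (1-γ) * ∫ (eY-X)⁺ ≤ γ * ∫ (Y-eY)⁺ - (1-γ) * ∫ (eY-Y)⁺ = 0
  -- strict decrease of the FOC function for X between eY and eX
  have hle : ∀ ω, γ * max (X ω - eX) 0 - (1 - γ) * max (eX - X ω) 0 + (1 - γ) * (eX - eY)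
      ≤ γ * max (X ω - eY) 0 - (1 - γ) * max (eY - X ω) 0 := by
    intro ω
    have h1 : max (X ω - eY) 0 - max (eY - X ω) 0 = X ω - eY := by
      have : eY - X ω = -(X ω - eY) := by ring
      rw [this]
      exact max_zero_sub_max_neg_zero_eq_self _
    have h2 : max (X ω - eX) 0 - max (eX - X ω) 0 = X ω - eX := by
      have : eX - X ω = -(X ω - eX) := by ring
      rw [this]
      exact max_zero_sub_max_neg_zero_eq_self _
    have h3 : max (X ω - eX) 0 ≤ max (X ω - eY) 0 :=
      max_le_max (by linarith) le_rfl
    have h4 : max (eY - X ω) 0 ≤ max (eX - X ω) 0 :=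
      max_le_max (by linarith) le_rfl
    nlinarith [mul_nonneg (show (0:ℝ) ≤ 2 * γ - 1 by linarith)
      (show (0:ℝ) ≤ max (X ω - eY) 0 - max (X ω - eX) 0 by linarith)]
  have int1 : Integrable (fun ω => γ * max (X ω - eX) 0 - (1 - γ) * max (eX - X ω) 0
      + (1 - γ) * (eX - eY)) μ :=
    (((int_pos_part hX eX).const_mul γ).sub ((int_neg_part hX eX).const_mul (1 - γ))).add
      (integrable_const _)
  have int2 : Integrable (fun ω => γ * max (X ω - eY) 0 - (1 - γ) * max (eY - X ω) 0) μ :=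
    ((int_pos_part hX eY).const_mul γ).sub ((int_neg_part hX eY).const_mul (1 - γ))
  have hmono := integral_mono int1 int2 hle
  have intsub : Integrable (fun ω => γ * max (X ω - eX) 0 - (1 - γ) * max (eX - X ω) 0) μ :=
    ((int_pos_part hX eX).const_mul γ).sub ((int_neg_part hX eX).const_mul (1 - γ))
  rw [integral_add intsub (integrable_const _),
    integral_sub ((int_pos_part hX eX).const_mul γ) ((int_neg_part hX eX).const_mul (1 - γ)),
    integral_sub ((int_pos_part hX eY).const_mul γ) ((int_neg_part hX eY).const_mul (1 - γ)),
    integral_const_mul, integral_const_mul, integral_const_mul, integral_const_mul,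
    integral_const_mul, integral_const, probReal_univ] at hmono
  simp only [ENNReal.toReal_one, one_smul, smul_eq_mul, one_mul] at hmono
  have hpos : 0 < (1 - γ) * (eX - eY) :=
    mul_pos (by linarith) (by linarith)
  linarith
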